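/- Let F be a homogeneous sextic form in ℂ[x₀,x₁,x₂,x₃] admitting a non-redundant decomposition F = Σ_{v∈A} a_v ℓ_v⁶ supported on a projectively distinct finite set A of nonzero vectors of ℂ⁴ which is in general position, with |A| = r ≤ 20. Let B be a projectively distinct finite set of nonzero vectors of ℂ⁴ with |B| ≤ r such that F lies in the ℂ-linear span of {ℓ_w⁶ : w ∈ B}. Then every homogeneous polynomial g ∈ R of degree at most 3 that vanishes at all points of A also vanishes at all points of B (that is, the homogeneous ideals of A and of Z = A ∪ B agree in all degrees ≤ 3). -/

import Mathlib

open MvPolynomial Finset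

/-- The linear form `ℓ_v = v₀x₀+v₁x₁+v₂x₂+v₃x₃` associated to a vector `v ∈ ℂ⁴`. -/
noncomputable def linF (v : Fin 4 → ℂ) : MvPolynomial (Fin 4) ℂ :=
  ∑ i, C (v i) * X i

/-- The ℂ-linear span of `{ℓ_v ^ d : v ∈ S}`. -/
noncomputable def powSpan (S : Finset (Fin 4 → ℂ)) (d : ℕ) :
    Submodule ℂ (MvPolynomial (Fin 4) ℂ) :=
  Submodule.span ℂ ((fun v => linF v ^ d) '' ↑S)

/-- A finite set of nonzero vectors, no two distinct elements of which are proportional. -/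
def ProjDistinct (S : Finset (Fin 4 → ℂ)) : Prop :=
  (∀ v ∈ S, v ≠ 0) ∧ ∀ v ∈ S, ∀ w ∈ S, v ≠ w → ∀ c : ℂ, v ≠ c • w

/-- No element of `A` is proportional to an element of `B`. -/
def ProjDisjoint (A B : Finset (Fin 4 → ℂ)) : Prop :=
  ∀ v ∈ A, ∀ w ∈ B, ∀ c : ℂ, v ≠ c • w

/-- Every element of `A` is proportional to an element of `B` and conversely. -/
def ProjEqual (A B : Finset (Fin 4 → ℂ)) : Prop :=
  (∀ v ∈ A, ∃ w ∈ B, ∃ c : ℂ, v = c • w) ∧ (∀ w ∈ B, ∃ v ∈ A, ∃ c : ℂ, w = c • v)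

/-- The Hilbert function `h_S(d) = dim_ℂ span{ℓ_v ^ d : v ∈ S}`. -/
noncomputable def hS (S : Finset (Fin 4 → ℂ)) (d : ℕ) : ℕ :=
  Module.finrank ℂ (powSpan S d)

/-- First difference `Dh_S(i) = h_S(i) - h_S(i-1)` of the Hilbert function
(with `h_S(-1) = 0`). -/
noncomputable def DhS (S : Finset (Fin 4 → ℂ)) : ℕ → ℕ
  | 0 => hS S 0
  | n + 1 => hS S (n + 1) - hS S n

/-- `A` is in general position: every subset has maximal Hilbert function. -/
def GP (A : Finset (Fin 4 → ℂ)) : Prop :=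
  ∀ S ⊆ A, ∀ d : ℕ, hS S d = min S.card (Nat.choose (d + 3) 3)

/-- `F = Σ_{v ∈ A} a_v ℓ_v ^ 6` with all coefficients nonzero, and `F` is not in the
span of the sixth powers of any proper subset of `A`. -/
def IsNonRedundantDecomp (F : MvPolynomial (Fin 4) ℂ) (A : Finset (Fin 4 → ℂ)) : Prop :=
  ∃ a : (Fin 4 → ℂ) → ℂ, (∀ v ∈ A, a v ≠ 0) ∧
    F = ∑ v ∈ A, a v • linF v ^ 6 ∧
    ∀ A' ⊂ A, F ∉ powSpan A' 6

/-- The Waring rank of a sextic form: the least cardinality of a projectively distinct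
set `B` with `F` in the span of `{ℓ_w ^ 6 : w ∈ B}`. -/
noncomputable def waringRank (F : MvPolynomial (Fin 4) ℂ) : ℕ :=
  sInf {n | ∃ B : Finset (Fin 4 → ℂ), ProjDistinct B ∧ B.card = n ∧ F ∈ powSpan B 6}

/-- The base locus of the cubics through `A` contains no curves: the set of
proportionality classes of nonzero vectors on which every homogeneous cubic vanishing
on `A` vanishes is finite (i.e. covered by finitely many classes). -/
def CubicBaseLocusFinite (A : Finset (Fin 4 → ℂ)) : Prop :=
  ∃ T : Finset (Fin 4 → ℂ), ∀ w : Fin 4 → ℂ, w ≠ 0 →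
    (∀ g : MvPolynomial (Fin 4) ℂ, g.IsHomogeneous 3 →
      (∀ v ∈ A, eval v g = 0) → eval w g = 0) →
    ∃ t ∈ T, ∃ c : ℂ, w = c • t

noncomputable def pd (i : Fin 4) : Module.End ℂ (MvPolynomial (Fin 4) ℂ) :=
  (pderiv i).toLinearMap

lemma pd_linF (i : Fin 4) (u : Fin 4 → ℂ) : pd i (linF u) = C (u i) := by
  simp [pd, linF, pderiv_X, Pi.single_apply]

lemma pd_linF_pow (i : Fin 4) (u : Fin 4 → ℂ) (n : ℕ) :
    pd i (linF u ^ n) = ((n : ℂ) * u i) • linF u ^ (n - 1) := by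
  have h1 : (pderiv i) (linF u) = C (u i) := pd_linF i u
  have := Derivation.leibniz_pow (pderiv i) (a := linF u) n
  simp only [pd, Derivation.coeFn_coe]
  rw [this, h1]
  simp only [smul_eq_mul, nsmul_eq_mul, smul_eq_C_mul, map_mul, map_natCast]
  ring

lemma pd_pow_linF (i : Fin 4) (m : ℕ) (u : Fin 4 → ℂ) : ∀ n : ℕ, m ≤ n →
    ((pd i)^m) (linF u ^ n)
      = ((n.descFactorial m : ℂ) * (u i)^m) • linF u ^ (n - m) := by
  induction m with
  | zero => intro n h; simp
  | succ m ih =>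
    intro n h
    rw [pow_succ, Module.End.mul_apply, pd_linF_pow, LinearMap.map_smul,
      ih (n-1) (by omega)]
    obtain ⟨n', rfl⟩ : ∃ n', n = n' + 1 := ⟨n - 1, by omega⟩
    simp only [Nat.add_sub_cancel]
    rw [smul_smul]
    have h2 : n' + 1 - (m + 1) = n' - m := by omega
    rw [h2]
    congr 1
    push_cast [Nat.succ_descFactorial_succ]
    ring

lemma desc_chain : ∀ (a b k : ℕ), a + b ≤ k →
    ((k - b).descFactorial a) * (k.descFactorial b) = k.descFactorial (a + b) := by
  intro a b
  induction b with
  | zero => intro k h; simp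
  | succ b ih =>
    intro k h
    have hm : 1 ≤ k - b := by omega
    obtain ⟨m, hm'⟩ : ∃ m, k - b = m + 1 := ⟨k - b - 1, by omega⟩
    have e1 : k - (b+1) = m := by omega
    have e2 : k - (a + b) = m + 1 - a := by omega
    rw [Nat.descFactorial_succ, show a + (b+1) = (a+b)+1 from rfl, Nat.descFactorial_succ,
      ← ih k (by omega), e1, e2, hm']
    have key : m.descFactorial a * (m + 1) = (m + 1 - a) * (m+1).descFactorial a := by
      rcases Nat.lt_or_ge m a with hlt | hge
      · -- a > m: descFactorial m a = 0 and m+1-a could be.. if a = m+1 then rhs 0; if a > m+1 rhs 0 too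
        rw [Nat.descFactorial_eq_zero_iff_lt.2 hlt, zero_mul]
        rcases Nat.lt_or_ge (m+1) a with h2 | h2
        · rw [Nat.descFactorial_eq_zero_iff_lt.2 h2, mul_zero]
        · have : a = m + 1 := by omega
          simp [this]
      · rw [mul_comm, ← Nat.succ_descFactorial_succ, Nat.descFactorial_succ]
    calc m.descFactorial a * ((m+1) * k.descFactorial b)
        = (m.descFactorial a * (m + 1)) * k.descFactorial b := by ring
      _ = ((m + 1 - a) * (m+1).descFactorial a) * k.descFactorial b := by rw [key]
      _ = (m + 1 - a) * ((m+1).descFactorial a * k.descFactorial b) := by ring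

/-- total degree of an exponent vector -/
def tot (α : Fin 4 →₀ ℕ) : ℕ := α 0 + α 1 + α 2 + α 3

noncomputable def Dop (α : Fin 4 →₀ ℕ) : Module.End ℂ (MvPolynomial (Fin 4) ℂ) :=
  (pd 0)^(α 0) * ((pd 1)^(α 1) * ((pd 2)^(α 2) * (pd 3)^(α 3)))

lemma Dop_linF (α : Fin 4 →₀ ℕ) (u : Fin 4 → ℂ) (n : ℕ) (h : tot α ≤ n) :
    Dop α (linF u ^ n)
      = ((n.descFactorial (tot α) : ℂ) * ∏ i, (u i)^(α i)) • linF u ^ (n - tot α) := by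
  have h3 : α 3 ≤ n := by unfold tot at h; omega
  have h2 : α 2 ≤ n - α 3 := by unfold tot at h; omega
  have h1 : α 1 ≤ n - α 3 - α 2 := by unfold tot at h; omega
  have h0 : α 0 ≤ n - α 3 - α 2 - α 1 := by unfold tot at h; omega
  rw [Dop, Module.End.mul_apply, Module.End.mul_apply, Module.End.mul_apply,
    pd_pow_linF _ _ _ _ h3]
  simp only [LinearMap.map_smul]
  rw [pd_pow_linF _ _ _ _ h2]
  simp only [LinearMap.map_smul]
  rw [pd_pow_linF _ _ _ _ h1]
  simp only [LinearMap.map_smul]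
  rw [pd_pow_linF _ _ _ _ h0]
  rw [smul_smul, smul_smul, smul_smul]
  have etot : n - α 3 - α 2 - α 1 - α 0 = n - tot α := by unfold tot at *; omega
  rw [etot]
  congr 1
  have c1 : ((n - α 3 - α 2 - α 1).descFactorial (α 0) : ℕ) * ((n - α 3 - α 2).descFactorial (α 1))
      * ((n - α 3).descFactorial (α 2)) * (n.descFactorial (α 3)) = n.descFactorial (tot α) := by
    have e1 := desc_chain (α 2) (α 3) n (by omega)
    have e2 := desc_chain (α 1) (α 2 + α 3) n (by omega)
    have e3 := desc_chain (α 0) (α 1 + (α 2 + α 3)) n (by omega)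
    have r1 : n - α 3 - α 2 = n - (α 2 + α 3) := by omega
    have r2 : n - α 3 - α 2 - α 1 = n - (α 1 + (α 2 + α 3)) := by omega
    rw [r2, r1]
    calc (n - (α 1 + (α 2 + α 3))).descFactorial (α 0) * (n - (α 2 + α 3)).descFactorial (α 1)
          * (n - α 3).descFactorial (α 2) * n.descFactorial (α 3)
        = (n - (α 1 + (α 2 + α 3))).descFactorial (α 0) * (n - (α 2 + α 3)).descFactorial (α 1)
          * ((n - α 3).descFactorial (α 2) * n.descFactorial (α 3)) := by ring
      _ = (n - (α 1 + (α 2 + α 3))).descFactorial (α 0) * ((n - (α 2 + α 3)).descFactorial (α 1)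
          * n.descFactorial (α 2 + α 3)) := by rw [e1]; ring
      _ = (n - (α 1 + (α 2 + α 3))).descFactorial (α 0) * n.descFactorial (α 1 + (α 2 + α 3)) := by rw [e2]
      _ = n.descFactorial (α 0 + (α 1 + (α 2 + α 3))) := e3
      _ = n.descFactorial (tot α) := by unfold tot; ring_nf
  rw [Fin.prod_univ_four, ← c1]
  push_cast
  ring

lemma tot_eq_degree (α : Fin 4 →₀ ℕ) : tot α = Finsupp.degree α := by
  rw [Finsupp.degree_apply, Finset.sum_subset (Finset.subset_univ α.support)
    (by intro x _ hx; exact Finsupp.notMem_support_iff.1 hx), Fin.sum_univ_four, tot]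

lemma isHomog_support_tot {g : MvPolynomial (Fin 4) ℂ} {d : ℕ} (hg : g.IsHomogeneous d)
    {α : Fin 4 →₀ ℕ} (hα : α ∈ g.support) : tot α = d := by
  rw [tot_eq_degree]
  have := hg (mem_support_iff.1 hα)
  rw [Finsupp.degree_eq_weight_one]; exact this

noncomputable def Dg (g : MvPolynomial (Fin 4) ℂ) : Module.End ℂ (MvPolynomial (Fin 4) ℂ) :=
  ∑ α ∈ g.support, coeff α g • Dop α

lemma Dg_linF {g : MvPolynomial (Fin 4) ℂ} {d : ℕ} (hg : g.IsHomogeneous d)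
    (u : Fin 4 → ℂ) (n : ℕ) (h : d ≤ n) :
    Dg g (linF u ^ n)
      = ((n.descFactorial d : ℂ) * eval u g) • linF u ^ (n - d) := by
  rw [Dg, LinearMap.sum_apply]
  have : ∀ α ∈ g.support, (coeff α g • Dop α) (linF u ^ n)
      = (coeff α g * ((n.descFactorial d : ℂ) * ∏ i, (u i)^(α i))) • linF u ^ (n - d) := by
    intro α hα
    rw [LinearMap.smul_apply, Dop_linF α u n (by rw [isHomog_support_tot hg hα]; exact h),
      isHomog_support_tot hg hα, smul_smul]
  rw [Finset.sum_congr rfl this, ← Finset.sum_smul]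
  congr 1
  rw [eval_eq' u g, Finset.mul_sum]
  apply Finset.sum_congr rfl
  intro α hα
  ring

lemma linF_isHomog (u : Fin 4 → ℂ) : (linF u).IsHomogeneous 1 := by
  apply IsHomogeneous.sum
  intro i _
  exact (isHomogeneous_X ℂ i).C_mul _

/-- scaling map sending `X i ↦ C (v i) * X i` -/
noncomputable def scaleHom (v : Fin 4 → ℂ) :
    MvPolynomial (Fin 4) ℂ →ₐ[ℂ] MvPolynomial (Fin 4) ℂ :=
  bind₁ (fun i => C (v i) * X i)

lemma scaleHom_monomial (v : Fin 4 → ℂ) (β : Fin 4 →₀ ℕ) (c : ℂ) :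
    scaleHom v (monomial β c) = monomial β (c * ∏ i ∈ β.support, (v i)^(β i)) := by
  rw [scaleHom, bind₁_monomial]
  rw [monomial_eq, Finsupp.prod]
  rw [Finset.prod_congr rfl (fun i _ => mul_pow (C (v i)) (X i) (β i)),
    Finset.prod_mul_distrib]
  rw [map_mul, map_prod C (fun i => (v i)^(β i))]
  simp only [map_pow]
  ring

lemma scaleHom_linF_one (v : Fin 4 → ℂ) : scaleHom v (linF 1) = linF v := by
  rw [linF, map_sum]
  apply Finset.sum_congr rfl
  intro i _
  simp [scaleHom, linF]

lemma coeff_linF_pow (v : Fin 4 → ℂ) (k : ℕ) (α : Fin 4 →₀ ℕ) :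
    coeff α (linF v ^ k)
      = coeff α (linF 1 ^ k) * ∏ i ∈ α.support, (v i)^(α i) := by
  have : linF v ^ k = scaleHom v (linF 1 ^ k) := by
    rw [map_pow, scaleHom_linF_one]
  rw [this]
  conv_lhs => rw [(linF 1 ^ k).as_sum, map_sum]
  rw [Finset.sum_congr rfl (fun β _ => scaleHom_monomial v β _)]
  rw [coeff_sum]
  simp only [coeff_monomial]
  rw [Finset.sum_ite_eq' ((linF 1 ^ k)).support α]
  by_cases hα : α ∈ (linF 1 ^ k).support
  · simp [hα]
  · simp [hα, notMem_support_iff.1 hα]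

noncomputable def interp (φ : Module.Dual ℂ (MvPolynomial (Fin 4) ℂ)) :
    MvPolynomial (Fin 4) ℂ :=
  ∑ α ∈ (linF 1 ^ 3).support, monomial α (φ (monomial α 1) * coeff α (linF 1 ^ 3))

lemma interp_isHomog (φ : Module.Dual ℂ (MvPolynomial (Fin 4) ℂ)) :
    (interp φ).IsHomogeneous 3 := by
  apply IsHomogeneous.sum
  intro α hα
  apply isHomogeneous_monomial
  have h13 : (linF (1 : Fin 4 → ℂ) ^ 3).IsHomogeneous 3 := by
    simpa using (linF_isHomog 1).pow 3
  rw [← tot_eq_degree]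
  exact isHomog_support_tot h13 hα

lemma eval_interp (φ : Module.Dual ℂ (MvPolynomial (Fin 4) ℂ)) (v : Fin 4 → ℂ) :
    eval v (interp φ) = φ (linF v ^ 3) := by
  have hsub : (linF v ^ 3).support ⊆ (linF 1 ^ 3).support := by
    intro α hα
    rw [mem_support_iff] at hα ⊢
    intro h0
    exact hα (by rw [coeff_linF_pow, h0, zero_mul])
  have hv3 : linF v ^ 3 = ∑ α ∈ (linF 1 ^ 3).support, monomial α (coeff α (linF v ^ 3)) := by
    conv_lhs => rw [(linF v ^ 3).as_sum]
    apply Finset.sum_subset hsub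
    intro α _ hα
    rw [notMem_support_iff.1 hα, monomial_zero]
  rw [hv3, map_sum, interp, map_sum]
  apply Finset.sum_congr rfl
  intro α _
  have hm : (monomial α) (coeff α (linF v ^ 3)) = coeff α (linF v ^ 3) • monomial α 1 := by
    rw [smul_monomial, smul_eq_mul, mul_one]
  rw [hm, map_smul, eval_monomial, smul_eq_mul, Finsupp.prod, coeff_linF_pow v 3 α]
  ring

set_option synthInstance.maxHeartbeats 1000000 in
lemma exists_dual (p : Submodule ℂ (MvPolynomial (Fin 4) ℂ)) (x : MvPolynomial (Fin 4) ℂ)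
    (hx : x ∉ p) :
    ∃ φ : Module.Dual ℂ (MvPolynomial (Fin 4) ℂ), (∀ y ∈ p, φ y = 0) ∧ φ x ≠ 0 := by
  have hx' : (Submodule.Quotient.mk x : MvPolynomial (Fin 4) ℂ ⧸ p) ≠ 0 := by
    rwa [ne_eq, Submodule.Quotient.mk_eq_zero]
  have : ¬ ∀ ψ : Module.Dual ℂ (MvPolynomial (Fin 4) ℂ ⧸ p),
      ψ (Submodule.Quotient.mk x) = 0 := by
    rw [Module.forall_dual_apply_eq_zero_iff]
    exact hx'
  push_neg at this
  obtain ⟨ψ, hψ⟩ := this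
  refine ⟨ψ.comp p.mkQ, fun y hy => ?_, hψ⟩
  have : p.mkQ y = 0 := by
    rw [Submodule.mkQ_apply, Submodule.Quotient.mk_eq_zero]; exact hy
  simp [LinearMap.comp_apply, this]


/-- The homogeneous ideals of `A` and `Z = A ∪ B` agree in degrees `≤ 3`:
every homogeneous polynomial of degree at most `3` vanishing on `A` vanishes on `B`. -/
theorem stmt_2 (F : MvPolynomial (Fin 4) ℂ) (A : Finset (Fin 4 → ℂ)) (r : ℕ)
    (hA : ProjDistinct A) (hGP : GP A) (hcard : A.card = r) (hr : r ≤ 20)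
    (hdec : IsNonRedundantDecomp F A)
    (B : Finset (Fin 4 → ℂ)) (hB : ProjDistinct B) (hBcard : B.card ≤ r)
    (hFB : F ∈ powSpan B 6) :
    ∀ d : ℕ, d ≤ 3 → ∀ g : MvPolynomial (Fin 4) ℂ, g.IsHomogeneous d →
      (∀ v ∈ A, eval v g = 0) → ∀ w ∈ B, eval w g = 0 := by
  obtain ⟨a, ha, hFA, -⟩ := hdec
  rw [powSpan] at hFB
  obtain ⟨l, hl, hFl⟩ := (Finsupp.mem_span_image_iff_linearCombination ℂ).1 hFB
  have hF2 : F = ∑ w ∈ B, l w • linF w ^ 6 := by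
    rw [← hFl, Finsupp.linearCombination_apply, Finsupp.sum]
    apply Finset.sum_subset
    · intro w hw
      exact_mod_cast (Finsupp.mem_supported ℂ l).1 hl hw
    · intro w _ hw
      rw [Finsupp.notMem_support_iff.1 hw, zero_smul]
  -- dimension of the cubic span of A
  have hchoose : Nat.choose 6 3 = 20 := by decide
  have hrV : Module.finrank ℂ (powSpan A 3) = r := by
    have := hGP A (Finset.Subset.refl A) 3
    rw [hS, hcard, hchoose] at this
    rw [this, min_eq_left hr]
  -- A's cubes lie in the span of B's cubes
  have hVW : powSpan A 3 ≤ powSpan B 3 := by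
    rw [powSpan, Submodule.span_le]
    rintro _ ⟨v0, hv0, rfl⟩
    have hrpos : 1 ≤ r := hcard ▸ Finset.card_pos.2 ⟨v0, hv0⟩
    have hx : linF v0 ^ 3 ∉ powSpan (A.erase v0) 3 := by
      intro hmem
      have hins : (insert v0 (A.erase v0) : Finset _) = A := Finset.insert_erase hv0
      have hspan : powSpan A 3 = powSpan (A.erase v0) 3 := by
        rw [powSpan] at hmem
        rw [powSpan, powSpan]
        conv_lhs => rw [← hins, Finset.coe_insert, Set.image_insert_eq]
        rw [Submodule.span_insert_eq_span hmem]
      have h2 := hGP (A.erase v0) (Finset.erase_subset _ _) 3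
      rw [hS, Finset.card_erase_of_mem hv0, hcard, hchoose] at h2
      have : Module.finrank ℂ (powSpan (A.erase v0) 3) = r := by rw [← hspan, hrV]
      rw [this] at h2
      omega
    obtain ⟨φ, hφ0, hφx⟩ := exists_dual _ _ hx
    set g := interp φ with hgdef
    have hgvan : ∀ v ∈ A.erase v0, eval v g = 0 := by
      intro v hv
      rw [hgdef, eval_interp]
      exact hφ0 _ (Submodule.subset_span ⟨v, by exact_mod_cast hv, rfl⟩)
    have hDgA : Dg g F = (a v0 * (((6).descFactorial 3 : ℂ) * eval v0 g)) • linF v0 ^ 3 := by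
      rw [hFA, map_sum]
      rw [Finset.sum_eq_single_of_mem v0 hv0]
      · rw [map_smul, Dg_linF (interp_isHomog φ) v0 6 (by norm_num), smul_smul]
      · intro v hv hne
        rw [map_smul, Dg_linF (interp_isHomog φ) v 6 (by norm_num),
          hgvan v (Finset.mem_erase.2 ⟨hne, hv⟩)]
        simp
    have hDgB : Dg g F ∈ powSpan B 3 := by
      rw [hF2, map_sum]
      apply Submodule.sum_mem
      intro w hw
      rw [map_smul, Dg_linF (interp_isHomog φ) w 6 (by norm_num)]
      exact Submodule.smul_mem _ _ (Submodule.smul_mem _ _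
        (Submodule.subset_span ⟨w, by exact_mod_cast hw, rfl⟩))
    rw [hDgA] at hDgB
    have hne : a v0 * (((6).descFactorial 3 : ℂ) * eval v0 g) ≠ 0 := by
      apply mul_ne_zero (ha v0 hv0)
      apply mul_ne_zero (by norm_num)
      rw [hgdef, eval_interp]
      exact hφx
    exact (Submodule.smul_mem_iff _ hne).1 hDgB
  -- hence equality of the cubic spans
  haveI : FiniteDimensional ℂ (powSpan B 3) := by
    rw [powSpan]
    exact FiniteDimensional.span_of_finite ℂ ((B.finite_toSet).image _)
  have hVeqW : powSpan A 3 = powSpan B 3 := by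
    apply Submodule.eq_of_le_of_finrank_le hVW
    rw [hrV]
    have h1 : ((fun v => linF v ^ 3) '' ↑B) = ↑(B.image (fun v => linF v ^ 3)) :=
      (Finset.coe_image).symm
    calc Module.finrank ℂ (powSpan B 3)
        ≤ (B.image (fun v => linF v ^ 3)).card := by
          rw [powSpan, h1]; exact finrank_span_finset_le_card _
      _ ≤ B.card := Finset.card_image_le
      _ ≤ r := hBcard
  -- final argument
  intro d hd g hg hvan w hw
  obtain ⟨i, hi⟩ := Function.ne_iff.1 (hB.1 w hw)
  have hXpow : (X i ^ (3 - d) : MvPolynomial (Fin 4) ℂ).IsHomogeneous (3 - d) := by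
    simpa only [one_mul] using (isHomogeneous_X ℂ i).pow (3 - d)
  have hg' : (g * X i ^ (3 - d)).IsHomogeneous 3 := by
    have := hg.mul hXpow
    rwa [show d + (3 - d) = 3 by omega] at this
  have hvan' : ∀ v ∈ A, eval v (g * X i ^ (3 - d)) = 0 := by
    intro v hv
    rw [eval_mul, hvan v hv, zero_mul]
  have hker : powSpan A 3 ≤ LinearMap.ker (Dg (g * X i ^ (3 - d))) := by
    rw [powSpan, Submodule.span_le]
    rintro _ ⟨v, hv, rfl⟩
    simp only [SetLike.mem_coe, LinearMap.mem_ker]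
    rw [Dg_linF hg' v 3 le_rfl, hvan' v (by exact_mod_cast hv)]
    simp
  have hwmem : linF w ^ 3 ∈ powSpan A 3 := by
    rw [hVeqW]
    exact Submodule.subset_span ⟨w, by exact_mod_cast hw, rfl⟩
  have h0 := hker hwmem
  rw [LinearMap.mem_ker, Dg_linF hg' w 3 le_rfl] at h0
  have h1 : (((3).descFactorial 3 : ℂ) * eval w (g * X i ^ (3 - d))) = 0 := by
    have hone : (linF w ^ (3 - 3) : MvPolynomial (Fin 4) ℂ) = 1 := by norm_num
    rw [hone, smul_eq_C_mul, mul_one] at h0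
    exact_mod_cast (C_eq_zero).1 h0
  have h2 : eval w (g * X i ^ (3 - d)) = 0 := by
    have : ((3).descFactorial 3 : ℂ) ≠ 0 := by norm_num
    exact (mul_eq_zero.1 h1).resolve_left this
  rw [eval_mul, map_pow, eval_X] at h2
  exact (mul_eq_zero.1 h2).resolve_right (pow_ne_zero _ hi)
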